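/- Let g_θ : [0,1) → ℝ be defined by g_θ(x) = 1 - 3/((√((4-x)/(1-x)) + 1)² - 1). Then for every x ∈ [0,1), g_θ(x) ∈ [0,1), and for every natural number r, the r-fold iterate g_θ^{(r)}(x) (which is well defined since g_θ maps [0,1) into itself) satisfies g_θ^{(r)}(x) = 1 - 3/((√((4-x)/(1-x)) + r)² - 1). -/

import Mathlib

/-- The offspring generating function of the skeleton decomposition. -/
noncomputable def gTheta (x : ℝ) : ℝ :=
  1 - 3 / ((Real.sqrt ((4 - x) / (1 - x)) + 1) ^ 2 - 1)

lemma gTheta_key (x : ℝ) (hx : x ∈ Set.Ico (0 : ℝ) 1) :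
    gTheta x ∈ Set.Ico (0 : ℝ) 1 ∧
      Real.sqrt ((4 - gTheta x) / (1 - gTheta x)) =
        Real.sqrt ((4 - x) / (1 - x)) + 1 := by
  obtain ⟨hx0, hx1⟩ := hx
  have h1x : (0:ℝ) < 1 - x := by linarith
  set s := Real.sqrt ((4 - x) / (1 - x)) with hs
  have hAnn : (0:ℝ) ≤ (4 - x) / (1 - x) := div_nonneg (by linarith) h1x.le
  have hsq : s ^ 2 = (4 - x) / (1 - x) := Real.sq_sqrt hAnn
  have h4 : (4:ℝ) ≤ (4 - x) / (1 - x) := by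
    rw [le_div_iff₀ h1x]; linarith
  have hsnn : 0 ≤ s := Real.sqrt_nonneg _
  have hs2 : 2 ≤ s := by nlinarith
  have hD : (8:ℝ) ≤ (s + 1) ^ 2 - 1 := by nlinarith
  have hDpos : (0:ℝ) < (s + 1) ^ 2 - 1 := by linarith
  have hg : gTheta x = 1 - 3 / ((s + 1) ^ 2 - 1) := rfl
  have h1g : 1 - gTheta x = 3 / ((s + 1) ^ 2 - 1) := by rw [hg]; ring
  have hgpos : 0 < 3 / ((s + 1) ^ 2 - 1) := by positivity
  have hgle : 3 / ((s + 1) ^ 2 - 1) ≤ 3 / 8 := by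
    apply div_le_div_of_nonneg_left (by norm_num) (by norm_num) hD
  have hmem : gTheta x ∈ Set.Ico (0:ℝ) 1 := by
    constructor
    · rw [hg]; linarith
    · rw [hg]; linarith
  refine ⟨hmem, ?_⟩
  have hratio : (4 - gTheta x) / (1 - gTheta x) = (s + 1) ^ 2 := by
    rw [hg]
    field_simp
    ring
  rw [hratio, Real.sqrt_sq (by linarith)]

lemma gTheta_iter (r : ℕ) : ∀ x ∈ Set.Ico (0 : ℝ) 1,
    gTheta^[r] x = 1 - 3 / ((Real.sqrt ((4 - x) / (1 - x)) + r) ^ 2 - 1) := by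
  induction r with
  | zero =>
    intro x hx
    obtain ⟨hx0, hx1⟩ := hx
    have h1x : (0:ℝ) < 1 - x := by linarith
    have hAnn : (0:ℝ) ≤ (4 - x) / (1 - x) := div_nonneg (by linarith) h1x.le
    have hsq : Real.sqrt ((4 - x) / (1 - x)) ^ 2 = (4 - x) / (1 - x) :=
      Real.sq_sqrt hAnn
    simp only [Function.iterate_zero, id_eq, Nat.cast_zero, add_zero]
    rw [hsq]
    field_simp
    rw [show (4:ℝ) - x - (1 - x) = 3 by ring]
    linarith
  | succ r ih =>
    intro x hx
    obtain ⟨hmem, hsqrt⟩ := gTheta_key x hx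
    rw [Function.iterate_succ_apply, ih (gTheta x) hmem, hsqrt]
    push_cast
    ring_nf

theorem stmt_2 (x : ℝ) (hx : x ∈ Set.Ico (0 : ℝ) 1) :
    gTheta x ∈ Set.Ico (0 : ℝ) 1 ∧
      ∀ r : ℕ, gTheta^[r] x =
        1 - 3 / ((Real.sqrt ((4 - x) / (1 - x)) + r) ^ 2 - 1) := by
  exact ⟨(gTheta_key x hx).1, fun r => gTheta_iter r x hx⟩
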